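/- arXiv:2406.09793 — 8 statements merged into one kernel-verified Lean document; each statement's English description precedes it below -/
import Mathlib

section
/- Let n ≥ 1, N ≥ 0 and let (ε_{i,j}) (i ∈ {0,…,N}, j ∈ {1,2}) be an admissible family of steps which additionally satisfies ε_{i,2} < ε_{i-1,1}/2 for every i ∈ {1,…,N}. If A ⊆ ℝⁿ is a Borel set with prescribed (ε_{i,j})-steps, then Leb(A) ≤ V_n · ε_{N,2}^n · 3^{nN} · ∏_{i=0}^{N-1} (ε_{i,2}/ε_{i,1})^n, where Leb is Lebesgue measure on ℝⁿ and V_n is the Lebesgue measure of the unit ball of ℝⁿ. -/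
open MeasureTheory Metric
open scoped ENNReal

/-- Lebesgue measure bound for sets with prescribed steps. -/
theorem stmt_0 (n N : ℕ) (hn : 1 ≤ n) (ε₁ ε₂ : ℕ → ℝ)
    (hnonneg : ∀ i ≤ N, 0 ≤ ε₁ i ∧ 0 ≤ ε₂ i)
    (hadm : ∀ i < N, 0 < ε₂ (i + 1) ∧ ε₂ (i + 1) < ε₁ i ∧ ε₁ i < ε₂ i)
    (hN1 : ε₁ N = 0) (hN2 : 0 < ε₂ N)
    (hsep : ∀ i, 1 ≤ i → i ≤ N → ε₂ i < ε₁ (i - 1) / 2)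
    (A : Set (EuclideanSpace ℝ (Fin n))) (hA : MeasurableSet A)
    (hsteps : ∀ x ∈ A, ∀ y ∈ A, ∃ i ≤ N, ‖x - y‖ ∈ Set.Icc (ε₁ i) (ε₂ i)) :
    volume A ≤ volume (Metric.ball (0 : EuclideanSpace ℝ (Fin n)) 1) *
      ENNReal.ofReal (ε₂ N ^ n * 3 ^ (n * N) *
        ∏ i ∈ Finset.range N, (ε₂ i / ε₁ i) ^ n) := by
  induction N generalizing ε₁ ε₂ A with
  | zero =>
    rcases A.eq_empty_or_nonempty with hAe | ⟨x0, hx0⟩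
    · simp [hAe]
    have hsub : A ⊆ closedBall x0 (ε₂ 0) := by
      intro y hy
      obtain ⟨i, hi, _, h2⟩ := hsteps y hy x0 hx0
      interval_cases i
      simpa [mem_closedBall, dist_eq_norm] using h2
    calc volume A ≤ volume (closedBall x0 (ε₂ 0)) := measure_mono hsub
      _ = ENNReal.ofReal (ε₂ 0 ^ n) *
            volume (ball (0 : EuclideanSpace ℝ (Fin n)) 1) := by
          rw [Measure.addHaar_closedBall _ _ hN2.le, finrank_euclideanSpace_fin]
      _ = _ := by
          rw [mul_comm]
          norm_num
  | succ N IH =>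
    rcases A.eq_empty_or_nonempty with hAe | ⟨x0, hx0⟩
    · simp [hAe]
    haveI : Nontrivial (EuclideanSpace ℝ (Fin n)) :=
      Module.nontrivial_of_finrank_pos (R := ℝ)
        (by rw [finrank_euclideanSpace_fin]; omega)
    obtain ⟨hε21pos, hε21lt, hε01lt⟩ := hadm 0 (Nat.succ_pos N)
    have h2ε21 : 2 * ε₂ 1 < ε₁ 0 := by
      have := hsep 1 le_rfl (by omega)
      simpa using by linarith
    have hε10 : 0 < ε₁ 0 := lt_trans hε21pos hε21lt
    have hε20 : 0 < ε₂ 0 := lt_trans hε10 hε01lt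
    -- monotonicity of ε₂
    have hmono : ∀ i, i ≤ N + 1 → ε₂ i ≤ ε₂ 0 := by
      intro i hi
      induction i with
      | zero => exact le_rfl
      | succ j ihj =>
        obtain ⟨_, h1, h2⟩ := hadm j (by omega)
        have := ihj (by omega)
        linarith
    have hmono1 : ∀ i, 1 ≤ i → i ≤ N + 1 → ε₂ i ≤ ε₂ 1 := by
      intro i h1i hi
      induction i with
      | zero => omega
      | succ j ihj =>
        rcases Nat.eq_zero_or_pos j with rfl | hj
        · exact le_rfl
        · obtain ⟨_, h1, h2⟩ := hadm j (by omega)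
          have := ihj hj (by omega)
          linarith
    have hdiam : ∀ x ∈ A, ∀ y ∈ A, ‖x - y‖ ≤ ε₂ 0 := by
      intro x hx y hy
      obtain ⟨i, hi, _, h2⟩ := hsteps x hx y hy
      exact h2.trans (hmono i hi)
    have hdich : ∀ x ∈ A, ∀ y ∈ A, ‖x - y‖ < ε₁ 0 → ‖x - y‖ ≤ ε₂ 1 := by
      intro x hx y hy hlt
      obtain ⟨i, hi, h1, h2⟩ := hsteps x hx y hy
      rcases Nat.eq_zero_or_pos i with rfl | hi1
      · exact absurd h1 (not_le.2 hlt)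
      · exact h2.trans (hmono1 i hi1 hi)
    -- maximal separated subset via Zorn
    have hchaincond : ∀ c ⊆ {S : Set (EuclideanSpace ℝ (Fin n)) |
        S ⊆ A ∧ ∀ x ∈ S, ∀ y ∈ S, x ≠ y → ε₁ 0 ≤ ‖x - y‖},
        IsChain (fun x1 x2 => x1 ⊆ x2) c → ∃ ub ∈ {S : Set (EuclideanSpace ℝ (Fin n)) |
        S ⊆ A ∧ ∀ x ∈ S, ∀ y ∈ S, x ≠ y → ε₁ 0 ≤ ‖x - y‖}, ∀ s ∈ c, s ⊆ ub := by
      intro c hc hchain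
      refine ⟨⋃₀ c, ⟨?_, ?_⟩, fun s hs => Set.subset_sUnion_of_mem hs⟩
      · intro x hx
        obtain ⟨s, hs, hxs⟩ := hx
        exact (hc hs).1 hxs
      · rintro x ⟨s, hs, hxs⟩ y ⟨t, ht, hyt⟩ hxy
        rcases hchain.total hs ht with h | h
        · exact (hc ht).2 x (h hxs) y hyt hxy
        · exact (hc hs).2 x hxs y (h hyt) hxy
    obtain ⟨S, hSmax⟩ := zorn_subset _ hchaincond
    obtain ⟨⟨hSA, hSsep⟩, hSm⟩ := hSmax
    -- maximality gives covering
    have hcov : ∀ a ∈ A, ∃ s ∈ S, ‖a - s‖ ≤ ε₂ 1 := by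
      intro a ha
      by_cases h : ∃ s ∈ S, ‖a - s‖ < ε₁ 0
      · obtain ⟨s, hs, hlt⟩ := h
        exact ⟨s, hs, hdich a ha s (hSA hs) hlt⟩
      · push_neg at h
        exfalso
        have hins : insert a S ∈ {S : Set (EuclideanSpace ℝ (Fin n)) |
            S ⊆ A ∧ ∀ x ∈ S, ∀ y ∈ S, x ≠ y → ε₁ 0 ≤ ‖x - y‖} := by
          constructor
          · exact Set.insert_subset ha hSA
          · rintro x (rfl | hx) y (rfl | hy) hxy
            · exact absurd rfl hxy
            · exact h y hy
            · rw [norm_sub_rev]; exact h x hx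
            · exact hSsep x hx y hy hxy
        have haS : a ∈ S := hSm hins (Set.subset_insert a S) (Set.mem_insert a S)
        have := h a haS
        simp at this
        linarith
    -- S is finite
    have hAsub : A ⊆ closedBall x0 (ε₂ 0) := by
      intro y hy
      simpa [mem_closedBall, dist_eq_norm] using hdiam y hy x0 hx0
    obtain ⟨t, htfin, htcov⟩ := totallyBounded_iff.1
      (isCompact_closedBall x0 (ε₂ 0)).totallyBounded (ε₁ 0 / 2) (by linarith)
    have hSfin : S.Finite := by
      have hss : ∀ y ∈ t, (S ∩ ball y (ε₁ 0 / 2)).Subsingleton := by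
        intro y _
        rintro u ⟨hu, hub⟩ v ⟨hv, hvb⟩
        by_contra huv
        have := hSsep u hu v hv huv
        have h1 : dist u v < ε₁ 0 := by
          calc dist u v ≤ dist u y + dist y v := dist_triangle u y v
            _ < ε₁ 0 / 2 + ε₁ 0 / 2 := by
                rw [dist_comm y v]
                exact add_lt_add (mem_ball.1 hub) (mem_ball.1 hvb)
            _ = ε₁ 0 := by ring
        rw [dist_eq_norm] at h1
        linarith
      have hScov : S ⊆ ⋃ y ∈ t, S ∩ ball y (ε₁ 0 / 2) := by
        intro s hs
        obtain ⟨y, hy, hyb⟩ := Set.mem_iUnion₂.1 (htcov (hAsub (hSA hs)))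
        exact Set.mem_iUnion₂.2 ⟨y, hy, hs, hyb⟩
      exact Set.Finite.subset (Set.Finite.biUnion htfin fun y hy => (hss y hy).finite) hScov
    set V := volume (Metric.ball (0 : EuclideanSpace ℝ (Fin n)) 1) with hV
    have hV0 : V ≠ 0 := (measure_ball_pos _ _ one_pos).ne'
    have hVtop : V ≠ ⊤ := measure_ball_lt_top.ne
    set Q : ℝ := ε₂ (N + 1) ^ n * 3 ^ (n * N) *
      ∏ i ∈ Finset.range N, (ε₂ (i + 1) / ε₁ (i + 1)) ^ n with hQ
    have hQ0 : 0 ≤ Q := by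
      apply mul_nonneg (mul_nonneg (pow_nonneg (hnonneg (N + 1) le_rfl).2 n) (by positivity))
      apply Finset.prod_nonneg
      intro i hi
      have hi' : i + 1 ≤ N + 1 := by
        have := Finset.mem_range.1 hi
        omega
      exact pow_nonneg (div_nonneg (hnonneg (i + 1) hi').2 (hnonneg (i + 1) hi').1) n
    clear_value Q
    -- cluster bound from IH
    have hclust : ∀ s ∈ A, volume (A ∩ closedBall s (ε₂ 1)) ≤ V * ENNReal.ofReal Q := by
      intro s hs
      rw [hQ]
      refine IH (fun i => ε₁ (i + 1)) (fun i => ε₂ (i + 1))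
        (fun i hi => hnonneg (i + 1) (by omega))
        (fun i hi => hadm (i + 1) (by omega)) hN1 hN2 ?_ _
        (hA.inter measurableSet_closedBall) ?_
      · intro i h1i hiN
        have h := hsep (i + 1) (by omega) (by omega)
        have hi' : i - 1 + 1 = i := Nat.succ_pred_eq_of_pos h1i
        show ε₂ (i + 1) < ε₁ (i - 1 + 1) / 2
        rw [hi']
        simpa using h
      · rintro x ⟨hxA, hxb⟩ y ⟨hyA, hyb⟩
        obtain ⟨i, hi, h1, h2⟩ := hsteps x hxA y hyA
        have hxy : ‖x - y‖ < ε₁ 0 := by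
          have hx' : dist x s ≤ ε₂ 1 := mem_closedBall.1 hxb
          have hy' : dist y s ≤ ε₂ 1 := mem_closedBall.1 hyb
          calc ‖x - y‖ = dist x y := (dist_eq_norm x y).symm
            _ ≤ dist x s + dist s y := dist_triangle x s y
            _ ≤ ε₂ 1 + ε₂ 1 := add_le_add hx' (by rwa [dist_comm])
            _ < ε₁ 0 := by linarith
        rcases i with _ | i
        · exact absurd h1 (not_le.2 hxy)
        · exact ⟨i, by omega, h1, h2⟩
    -- covering by clusters
    have F := hSfin.toFinset
    have hAcov : A ⊆ ⋃ s ∈ hSfin.toFinset, A ∩ closedBall s (ε₂ 1) := by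
      intro a ha
      obtain ⟨s, hs, hle⟩ := hcov a ha
      refine Set.mem_iUnion₂.2 ⟨s, hSfin.mem_toFinset.2 hs, ha, ?_⟩
      rw [mem_closedBall, dist_eq_norm]
      exact hle
    have hcount : volume A ≤ (hSfin.toFinset.card : ℝ≥0∞) * (V * ENNReal.ofReal Q) := by
      calc volume A ≤ ∑ s ∈ hSfin.toFinset, volume (A ∩ closedBall s (ε₂ 1)) :=
            (measure_mono hAcov).trans (measure_biUnion_finset_le _ _)
        _ ≤ ∑ s ∈ hSfin.toFinset, V * ENNReal.ofReal Q :=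
            Finset.sum_le_sum fun s hs => hclust s (hSA (hSfin.mem_toFinset.1 hs))
        _ = (hSfin.toFinset.card : ℝ≥0∞) * (V * ENNReal.ofReal Q) := by
            rw [Finset.sum_const, nsmul_eq_mul]
    -- packing bound on the cardinality
    have hdisj : (↑hSfin.toFinset : Set (EuclideanSpace ℝ (Fin n))).PairwiseDisjoint
        (fun s => ball s (ε₁ 0 / 2)) := by
      intro u hu v hv huv
      apply ball_disjoint_ball
      rw [dist_eq_norm]
      have := hSsep u (hSfin.mem_toFinset.1 hu) v (hSfin.mem_toFinset.1 hv) huv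
      linarith
    have hpack : (hSfin.toFinset.card : ℝ≥0∞) * (ENNReal.ofReal ((ε₁ 0 / 2) ^ n) * V) ≤
        ENNReal.ofReal ((3 * ε₂ 0 / 2) ^ n) * V := by
      calc (hSfin.toFinset.card : ℝ≥0∞) * (ENNReal.ofReal ((ε₁ 0 / 2) ^ n) * V)
          = ∑ s ∈ hSfin.toFinset, volume (ball s (ε₁ 0 / 2)) := by
            rw [Finset.sum_congr rfl fun s _ => by
              rw [Measure.addHaar_ball _ _ (by linarith : (0:ℝ) ≤ ε₁ 0 / 2),
                finrank_euclideanSpace_fin]]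
            rw [Finset.sum_const, nsmul_eq_mul]
        _ = volume (⋃ s ∈ hSfin.toFinset, ball s (ε₁ 0 / 2)) :=
            (measure_biUnion_finset hdisj fun _ _ => measurableSet_ball).symm
        _ ≤ volume (closedBall x0 (3 * ε₂ 0 / 2)) := by
            apply measure_mono
            intro y hy
            obtain ⟨s, hs, hyb⟩ := Set.mem_iUnion₂.1 hy
            have h1 : dist y s < ε₁ 0 / 2 := mem_ball.1 hyb
            have h2 : dist s x0 ≤ ε₂ 0 := mem_closedBall.1 (hAsub (hSA (hSfin.mem_toFinset.1 hs)))
            rw [mem_closedBall]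
            calc dist y x0 ≤ dist y s + dist s x0 := dist_triangle y s x0
              _ ≤ ε₁ 0 / 2 + ε₂ 0 := add_le_add h1.le h2
              _ ≤ 3 * ε₂ 0 / 2 := by linarith
        _ = ENNReal.ofReal ((3 * ε₂ 0 / 2) ^ n) * V := by
            rw [Measure.addHaar_closedBall _ _ (by linarith : (0:ℝ) ≤ 3 * ε₂ 0 / 2),
              finrank_euclideanSpace_fin]
    have hcard : (hSfin.toFinset.card : ℝ≥0∞) ≤ ENNReal.ofReal ((3 * (ε₂ 0 / ε₁ 0)) ^ n) := by
      have h1 : (hSfin.toFinset.card : ℝ≥0∞) * ENNReal.ofReal ((ε₁ 0 / 2) ^ n) ≤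
          ENNReal.ofReal ((3 * ε₂ 0 / 2) ^ n) := by
        rw [← ENNReal.mul_le_mul_iff_left hV0 hVtop, mul_assoc]
        exact hpack
      have hsplit : (3 * ε₂ 0 / 2 : ℝ) ^ n = (3 * (ε₂ 0 / ε₁ 0)) ^ n * (ε₁ 0 / 2) ^ n := by
        rw [← mul_pow]
        congr 1
        field_simp
      rw [hsplit, ENNReal.ofReal_mul (by positivity)] at h1
      have hb0 : ENNReal.ofReal ((ε₁ 0 / 2) ^ n) ≠ 0 := by
        simp only [ne_eq, ENNReal.ofReal_eq_zero, not_le]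
        positivity
      rwa [ENNReal.mul_le_mul_iff_left hb0 ENNReal.ofReal_ne_top] at h1
    -- combine
    have hfinal : (ε₂ (N + 1)) ^ n * 3 ^ (n * (N + 1)) *
        ∏ i ∈ Finset.range (N + 1), (ε₂ i / ε₁ i) ^ n = (3 * (ε₂ 0 / ε₁ 0)) ^ n * Q := by
      rw [hQ, Finset.prod_range_succ', show n * (N + 1) = n * N + n by ring, pow_add, mul_pow]
      ring
    calc volume A ≤ (hSfin.toFinset.card : ℝ≥0∞) * (V * ENNReal.ofReal Q) := hcount
      _ = V * ((hSfin.toFinset.card : ℝ≥0∞) * ENNReal.ofReal Q) := by ring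
      _ ≤ V * (ENNReal.ofReal ((3 * (ε₂ 0 / ε₁ 0)) ^ n) * ENNReal.ofReal Q) := by gcongr
      _ = V * ENNReal.ofReal ((3 * (ε₂ 0 / ε₁ 0)) ^ n * Q) := by
          rw [← ENNReal.ofReal_mul (by positivity : (0:ℝ) ≤ (3 * (ε₂ 0 / ε₁ 0)) ^ n)]
      _ = _ := by rw [hfinal]
end

section
/- Let n ≥ 1, N ≥ 0 and let (ε_{i,j}) (i ∈ {0,…,N}, j ∈ {1,2}) be an admissible family of steps which additionally satisfies ε_{i,2} < ε_{i-1,1}/2 for every i ∈ {1,…,N}. If A ⊆ ℝⁿ is a Borel set with prescribed (ε_{i,j})-steps, then A can be covered by at most p_N = 3^{nN} · ∏_{i=0}^{N-1} (ε_{i,2}/ε_{i,1})^n closed balls of radius ε_{N,2}; that is, there exists a finite set F ⊆ ℝⁿ with cardinality at most p_N such that A is contained in the union of the closed balls of radius ε_{N,2} centered at the points of F. -/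
open MeasureTheory Metric
open scoped ENNReal NNReal

-- packing lemma: a δ-separated finite set in a ball of radius R has ≤ ((R+δ/2)/(δ/2))^n points
lemma packing_bound (n : ℕ) (S : Finset (EuclideanSpace ℝ (Fin n)))
    (x0 : EuclideanSpace ℝ (Fin n)) (R δ : ℝ) (hδ : 0 < δ) (hR : 0 < R)
    (hsub : ∀ x ∈ S, dist x x0 ≤ R)
    (hsep : ∀ x ∈ S, ∀ y ∈ S, x ≠ y → δ ≤ dist x y) (hn : 1 ≤ n) :
    (S.card : ℝ) * (δ / 2) ^ n ≤ (R + δ / 2) ^ n := by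
  classical
  set μ : Measure (EuclideanSpace ℝ (Fin n)) := volume
  have hnontriv : Nontrivial (EuclideanSpace ℝ (Fin n)) := by
    have : Nontrivial (Fin n → ℝ) := by
      have : Nonempty (Fin n) := ⟨⟨0, hn⟩⟩
      infer_instance
    exact (WithLp.equiv 2 (Fin n → ℝ)).nontrivial
  have hdisj : (S : Set (EuclideanSpace ℝ (Fin n))).PairwiseDisjoint
      (fun x => ball x (δ / 2)) := by
    intro x hx y hy hxy
    refine Set.disjoint_left.2 fun z hzx hzy => ?_
    have h1 : dist z x < δ / 2 := mem_ball.1 hzx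
    have h2 : dist z y < δ / 2 := mem_ball.1 hzy
    have : dist x y < δ := by
      calc dist x y ≤ dist x z + dist z y := dist_triangle x z y
        _ < δ / 2 + δ / 2 := by rw [dist_comm x z]; linarith
        _ = δ := by ring
    exact absurd (hsep x hx y hy hxy) (not_le.2 this)
  have hmeas : μ (⋃ x ∈ S, ball x (δ / 2)) = ∑ x ∈ S, μ (ball x (δ / 2)) :=
    measure_biUnion_finset hdisj (fun _ _ => measurableSet_ball)
  have hsubball : (⋃ x ∈ S, ball x (δ / 2)) ⊆ ball x0 (R + δ / 2) := by
    intro z hz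
    simp only [Set.mem_iUnion] at hz
    obtain ⟨x, hx, hzx⟩ := hz
    have : dist z x0 ≤ dist z x + dist x x0 := dist_triangle z x x0
    have h1 : dist z x < δ / 2 := mem_ball.1 hzx
    exact mem_ball.2 (by have := hsub x hx; linarith)
  have hfr : Module.finrank ℝ (EuclideanSpace ℝ (Fin n)) = n := by
    simp [finrank_euclideanSpace]
  have hball : ∀ x : EuclideanSpace ℝ (Fin n),
      μ (ball x (δ / 2)) = ENNReal.ofReal ((δ / 2) ^ n) * μ (ball 0 1) := by
    intro x
    rw [Measure.addHaar_ball_of_pos μ x (by linarith), hfr]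
  have hbig : μ (ball x0 (R + δ / 2)) = ENNReal.ofReal ((R + δ / 2) ^ n) * μ (ball 0 1) := by
    rw [Measure.addHaar_ball_of_pos μ x0 (by linarith), hfr]
  have hle : (S.card : ℝ≥0∞) * (ENNReal.ofReal ((δ / 2) ^ n) * μ (ball 0 1))
      ≤ ENNReal.ofReal ((R + δ / 2) ^ n) * μ (ball 0 1) := by
    calc (S.card : ℝ≥0∞) * (ENNReal.ofReal ((δ / 2) ^ n) * μ (ball 0 1))
        = ∑ x ∈ S, μ (ball x (δ / 2)) := by
          rw [Finset.sum_congr rfl (fun x _ => hball x), Finset.sum_const, nsmul_eq_mul]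
      _ = μ (⋃ x ∈ S, ball x (δ / 2)) := hmeas.symm
      _ ≤ μ (ball x0 (R + δ / 2)) := measure_mono hsubball
      _ = _ := hbig
  have hvpos : 0 < μ (ball (0 : EuclideanSpace ℝ (Fin n)) 1) :=
    measure_ball_pos μ 0 one_pos
  have hvfin : μ (ball (0 : EuclideanSpace ℝ (Fin n)) 1) ≠ ⊤ :=
    measure_ball_lt_top.ne
  rw [← mul_assoc] at hle
  have hvpos' : μ (ball (0 : EuclideanSpace ℝ (Fin n)) 1) ≠ 0 := hvpos.ne'
  have hle2 : (S.card : ℝ≥0∞) * ENNReal.ofReal ((δ / 2) ^ n)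
      ≤ ENNReal.ofReal ((R + δ / 2) ^ n) :=
    (ENNReal.mul_le_mul_iff_left hvpos' hvfin).1 hle
  have hcast : (S.card : ℝ≥0∞) * ENNReal.ofReal ((δ / 2) ^ n)
      = ENNReal.ofReal ((S.card : ℝ) * (δ / 2) ^ n) := by
    rw [ENNReal.ofReal_mul (by positivity), ENNReal.ofReal_natCast]
  rw [hcast] at hle2
  exact (ENNReal.ofReal_le_ofReal_iff (by positivity)).1 hle2

-- corollary: card ≤ 3^n (R/δ)^n when δ ≤ R
lemma packing_card (n : ℕ) (S : Finset (EuclideanSpace ℝ (Fin n)))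
    (x0 : EuclideanSpace ℝ (Fin n)) (R δ : ℝ) (hδ : 0 < δ) (hδR : δ ≤ R)
    (hsub : ∀ x ∈ S, dist x x0 ≤ R)
    (hsep : ∀ x ∈ S, ∀ y ∈ S, x ≠ y → δ ≤ dist x y) (hn : 1 ≤ n) :
    (S.card : ℝ) ≤ 3 ^ n * (R / δ) ^ n := by
  have hR : 0 < R := lt_of_lt_of_le hδ hδR
  have h := packing_bound n S x0 R δ hδ hR hsub hsep hn
  have h2 : (S.card : ℝ) * (δ / 2) ^ n ≤ (3 * (R / δ)) ^ n * (δ / 2) ^ n := by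
    calc (S.card : ℝ) * (δ / 2) ^ n ≤ (R + δ / 2) ^ n := h
      _ ≤ (3 * (R / δ) * (δ / 2)) ^ n := by
          apply pow_le_pow_left₀ (by linarith)
          have heq : 3 * (R / δ) * (δ / 2) = 3 * R / 2 := by field_simp
          rw [heq]; linarith
      _ = (3 * (R / δ)) ^ n * (δ / 2) ^ n := by rw [mul_pow]
  have h3 : (S.card : ℝ) ≤ (3 * (R / δ)) ^ n :=
    le_of_mul_le_mul_right (by simpa [mul_comm] using h2) (by positivity)
  calc (S.card : ℝ) ≤ (3 * (R / δ)) ^ n := h3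
    _ = 3 ^ n * (R / δ) ^ n := mul_pow 3 (R / δ) n

-- monotonicity of ε₂ along the admissible family
lemma eps_mono (ε₁ ε₂ : ℕ → ℝ) (N : ℕ)
    (hadm : ∀ i < N, 0 < ε₂ (i + 1) ∧ ε₂ (i + 1) < ε₁ i ∧ ε₁ i < ε₂ i) :
    ∀ j k, j ≤ k → k ≤ N → ε₂ k ≤ ε₂ j := by
  intro j k hjk hk
  induction k, hjk using Nat.le_induction with
  | base => exact le_rfl
  | succ k hk' ih =>
      have hkN : k < N := Nat.lt_of_succ_le hk
      obtain ⟨h1, h2, h3⟩ := hadm k hkN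
      have := ih (Nat.le_of_succ_le hk)
      linarith

lemma key_lemma (n : ℕ) (hn : 1 ≤ n) :
    ∀ N (ε₁ ε₂ : ℕ → ℝ),
      (∀ i ≤ N, 0 ≤ ε₁ i ∧ 0 ≤ ε₂ i) →
      (∀ i < N, 0 < ε₂ (i + 1) ∧ ε₂ (i + 1) < ε₁ i ∧ ε₁ i < ε₂ i) →
      ε₁ N = 0 → 0 < ε₂ N →
      (∀ i, 1 ≤ i → i ≤ N → ε₂ i < ε₁ (i - 1) / 2) →
      ∀ A : Set (EuclideanSpace ℝ (Fin n)),
        (∀ x ∈ A, ∀ y ∈ A, ∃ i ≤ N, ‖x - y‖ ∈ Set.Icc (ε₁ i) (ε₂ i)) →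
        ∃ F : Finset (EuclideanSpace ℝ (Fin n)),
          (F.card : ℝ) ≤ 3 ^ (n * N) * ∏ i ∈ Finset.range N, (ε₂ i / ε₁ i) ^ n ∧
          A ⊆ ⋃ c ∈ F, Metric.closedBall c (ε₂ N) := by
  intro N
  induction N with
  | zero =>
    intro ε₁ ε₂ hnonneg hadm hN1 hN2 hsep A hsteps
    rcases A.eq_empty_or_nonempty with rfl | ⟨x0, hx0⟩
    · exact ⟨∅, by simp, by simp⟩
    · refine ⟨{x0}, by simp, ?_⟩
      intro y hy
      obtain ⟨i, hi, h1, h2⟩ := hsteps x0 hx0 y hy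
      obtain rfl := Nat.le_zero.mp hi
      simp only [Set.mem_iUnion]
      refine ⟨x0, by simp, Metric.mem_closedBall.2 ?_⟩
      rw [dist_comm, dist_eq_norm]
      exact h2
  | succ N IH =>
    intro ε₁ ε₂ hnonneg hadm hN1 hN2 hsep A hsteps
    classical
    have hprodnonneg : (0:ℝ) ≤ 3 ^ (n * (N+1)) * ∏ i ∈ Finset.range (N+1), (ε₂ i / ε₁ i) ^ n := by
      apply mul_nonneg (by positivity)
      apply Finset.prod_nonneg
      intro i hi
      have h := hnonneg i (Finset.mem_range.1 hi).le
      exact pow_nonneg (div_nonneg h.2 h.1) n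
    rcases A.eq_empty_or_nonempty with rfl | ⟨x0, hx0⟩
    · exact ⟨∅, by simpa using hprodnonneg, by simp⟩
    have h00 : 0 < ε₂ 1 ∧ ε₂ 1 < ε₁ 0 ∧ ε₁ 0 < ε₂ 0 := hadm 0 (Nat.succ_pos N)
    have hε10 : 0 < ε₁ 0 := lt_trans h00.1 h00.2.1
    have hε20 : 0 < ε₂ 0 := lt_trans hε10 h00.2.2
    have hmono := eps_mono ε₁ ε₂ (N+1) hadm
    have hdich : ∀ x ∈ A, ∀ y ∈ A, dist x y ≤ ε₂ 1 ∨ ε₁ 0 ≤ dist x y := by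
      intro x hx y hy
      obtain ⟨i, hi, h1, h2⟩ := hsteps x hx y hy
      rw [← dist_eq_norm] at h1 h2
      rcases Nat.eq_zero_or_pos i with rfl | hip
      · exact Or.inr h1
      · exact Or.inl (h2.trans (hmono 1 i hip hi))
    have hdiam : ∀ x ∈ A, ∀ y ∈ A, dist x y ≤ ε₂ 0 := by
      intro x hx y hy
      obtain ⟨i, hi, h1, h2⟩ := hsteps x hx y hy
      rw [← dist_eq_norm] at h2
      exact h2.trans (hmono 0 i (Nat.zero_le i) hi)
    set P : Finset (EuclideanSpace ℝ (Fin n)) → Prop :=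
      fun S => ↑S ⊆ A ∧ ∀ x ∈ S, ∀ y ∈ S, x ≠ y → ε₁ 0 ≤ dist x y with hPdef
    have hcardP : ∀ S, P S → (S.card : ℝ) ≤ 3 ^ n * (ε₂ 0 / ε₁ 0) ^ n := by
      intro S hS
      exact packing_card n S x0 (ε₂ 0) (ε₁ 0) hε10 (le_of_lt h00.2.2)
        (fun x hxS => hdiam x (hS.1 (Finset.mem_coe.mpr hxS)) x0 hx0)
        hS.2 hn
    set K : ℕ := Nat.floor (3 ^ n * (ε₂ 0 / ε₁ 0) ^ n) with hKdef
    have hSK : ∀ S, P S → S.card ≤ K := fun S hS => Nat.le_floor (hcardP S hS)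
    set cards : Set ℕ := {k | ∃ S, P S ∧ S.card = k} with hcardsdef
    have hne : cards.Nonempty := ⟨0, ∅, ⟨by simp, by simp⟩, by simp⟩
    have hbdd : BddAbove cards := ⟨K, fun k hk => by
      obtain ⟨S, hS, rfl⟩ := hk; exact hSK S hS⟩
    have hmem : sSup cards ∈ cards := Nat.sSup_mem hne hbdd
    obtain ⟨S, hPS, hScard⟩ := hmem
    have hcover1 : ∀ y ∈ A, ∃ x ∈ S, dist x y ≤ ε₂ 1 := by
      intro y hy
      by_contra hcon
      push_neg at hcon
      have hyS : y ∉ S := by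
        intro hyS
        have := hcon y hyS
        rw [dist_self] at this
        exact absurd this (not_lt.2 (le_of_lt h00.1))
      have hPS' : P (insert y S) := by
        constructor
        · intro z hz
          rcases Finset.mem_insert.1 (Finset.mem_coe.1 hz) with rfl | hzS
          · exact hy
          · exact hPS.1 (Finset.mem_coe.2 hzS)
        · intro a ha b hb hab
          rcases Finset.mem_insert.1 ha with rfl | haS <;>
            rcases Finset.mem_insert.1 hb with rfl | hbS
          · exact absurd rfl hab
          · rcases hdich a hy b (hPS.1 (Finset.mem_coe.2 hbS)) with h | h
            · exact absurd (by rwa [dist_comm] at h) (not_le.2 (hcon b hbS))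
            · exact h
          · rcases hdich b hy a (hPS.1 (Finset.mem_coe.2 haS)) with h | h
            · exact absurd (by rwa [dist_comm] at h) (not_le.2 (hcon a haS))
            · rwa [dist_comm]
          · exact hPS.2 a haS b hbS hab
      have hle : (insert y S).card ≤ sSup cards := le_csSup hbdd ⟨insert y S, hPS', rfl⟩
      rw [Finset.card_insert_of_notMem hyS, hScard] at hle
      omega
    have hIH : ∀ x ∈ A, ∃ Fx : Finset (EuclideanSpace ℝ (Fin n)),
        (Fx.card : ℝ) ≤ 3 ^ (n * N) * ∏ i ∈ Finset.range N, (ε₂ (i+1) / ε₁ (i+1)) ^ n ∧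
        {y ∈ A | dist x y ≤ ε₂ 1} ⊆ ⋃ c ∈ Fx, Metric.closedBall c (ε₂ (N+1)) := by
      intro x hx
      refine IH (fun i => ε₁ (i+1)) (fun i => ε₂ (i+1))
        (fun i hi => hnonneg (i+1) (by omega))
        (fun i hi => hadm (i+1) (by omega))
        hN1 hN2
        (fun i h1 h2 => ?_)
        {y ∈ A | dist x y ≤ ε₂ 1} ?_
      · have hh := hsep (i+1) (by omega) (by omega)
        simp only [Nat.add_sub_cancel] at hh
        have hi' : i - 1 + 1 = i := by omega
        simpa [hi'] using hh
      · intro y hy z hz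
        obtain ⟨hyA, hyx⟩ := hy
        obtain ⟨hzA, hzx⟩ := hz
        obtain ⟨i, hi, h1, h2⟩ := hsteps y hyA z hzA
        rcases Nat.eq_zero_or_pos i with rfl | hip
        · exfalso
          have htri : dist y z ≤ ε₂ 1 + ε₂ 1 := by
            calc dist y z ≤ dist y x + dist x z := dist_triangle y x z
              _ ≤ ε₂ 1 + ε₂ 1 := by
                rw [dist_comm y x]; exact add_le_add hyx hzx
          have hs := hsep 1 le_rfl (by omega)
          simp only [Nat.sub_self] at hs
          rw [← dist_eq_norm] at h1
          linarith
        · have hi' : i - 1 + 1 = i := by omega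
          refine ⟨i - 1, by omega, ?_, ?_⟩
          · simpa [hi'] using h1
          · simpa [hi'] using h2
    choose! Fx hFcard hFcover using hIH
    refine ⟨S.biUnion Fx, ?_, ?_⟩
    · have hp' : (0:ℝ) ≤ 3 ^ (n * N) * ∏ i ∈ Finset.range N, (ε₂ (i+1) / ε₁ (i+1)) ^ n := by
        apply mul_nonneg (by positivity)
        apply Finset.prod_nonneg
        intro i hi
        have h := hnonneg (i+1) (Nat.succ_le_succ (Finset.mem_range.1 hi).le)
        exact pow_nonneg (div_nonneg h.2 h.1) n
      calc ((S.biUnion Fx).card : ℝ)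
          ≤ ∑ x ∈ S, ((Fx x).card : ℝ) := by exact_mod_cast Finset.card_biUnion_le
        _ ≤ ∑ x ∈ S, (3 ^ (n * N) * ∏ i ∈ Finset.range N, (ε₂ (i+1) / ε₁ (i+1)) ^ n) :=
            Finset.sum_le_sum fun x hxS => hFcard x (hPS.1 (Finset.mem_coe.2 hxS))
        _ = (S.card : ℝ) * (3 ^ (n * N) * ∏ i ∈ Finset.range N, (ε₂ (i+1) / ε₁ (i+1)) ^ n) := by
            rw [Finset.sum_const, nsmul_eq_mul]
        _ ≤ (3 ^ n * (ε₂ 0 / ε₁ 0) ^ n) *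
              (3 ^ (n * N) * ∏ i ∈ Finset.range N, (ε₂ (i+1) / ε₁ (i+1)) ^ n) :=
            mul_le_mul_of_nonneg_right (hcardP S hPS) hp'
        _ = 3 ^ (n * (N+1)) * ∏ i ∈ Finset.range (N+1), (ε₂ i / ε₁ i) ^ n := by
            rw [Finset.prod_range_succ', Nat.mul_succ, pow_add]
            ring
    · intro y hy
      obtain ⟨x, hxS, hxy⟩ := hcover1 y hy
      have hxA := hPS.1 (Finset.mem_coe.2 hxS)
      have hyC : y ∈ {z ∈ A | dist x z ≤ ε₂ 1} := ⟨hy, hxy⟩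
      have hmem2 := hFcover x hxA hyC
      simp only [Set.mem_iUnion] at hmem2 ⊢
      obtain ⟨c, hc, hyc⟩ := hmem2
      exact ⟨c, Finset.mem_biUnion.2 ⟨x, hxS, hc⟩, hyc⟩

/-- a set with prescribed steps is covered by at most
`p_N = 3^{nN} ∏ (ε_{i,2}/ε_{i,1})^n` closed balls of radius `ε_{N,2}`. -/
theorem stmt_1 (n N : ℕ) (hn : 1 ≤ n) (ε₁ ε₂ : ℕ → ℝ)
    (hnonneg : ∀ i ≤ N, 0 ≤ ε₁ i ∧ 0 ≤ ε₂ i)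
    (hadm : ∀ i < N, 0 < ε₂ (i + 1) ∧ ε₂ (i + 1) < ε₁ i ∧ ε₁ i < ε₂ i)
    (hN1 : ε₁ N = 0) (hN2 : 0 < ε₂ N)
    (hsep : ∀ i, 1 ≤ i → i ≤ N → ε₂ i < ε₁ (i - 1) / 2)
    (A : Set (EuclideanSpace ℝ (Fin n))) (hA : MeasurableSet A)
    (hsteps : ∀ x ∈ A, ∀ y ∈ A, ∃ i ≤ N, ‖x - y‖ ∈ Set.Icc (ε₁ i) (ε₂ i)) :
    ∃ F : Finset (EuclideanSpace ℝ (Fin n)),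
      (F.card : ℝ) ≤ 3 ^ (n * N) * ∏ i ∈ Finset.range N, (ε₂ i / ε₁ i) ^ n ∧
      A ⊆ ⋃ c ∈ F, Metric.closedBall c (ε₂ N) :=
  key_lemma n hn N ε₁ ε₂ hnonneg hadm hN1 hN2 hsep A hsteps
end

section
/- For all reals 0 < r₂ < r₁ < r < 1, setting R_j = log((1+r_j)/(1−r_j)) for j ∈ {1,2}, one has | ∫_{r₂}^{r₁} log(r/ρ) · 4ρ/(1−ρ²)² dρ − (R₁ − R₂) | ≤ 3. -/
open Real

lemma my_deriv (r ρ : ℝ) (hr : 0 < r) (h0 : 0 < ρ) (h1 : ρ < 1) :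
    HasDerivAt (fun x : ℝ => (Real.log r - Real.log x) * (2 / (1 - x ^ 2))
        + 2 * Real.log x - Real.log (1 - x ^ 2))
      (Real.log (r / ρ) * (4 * ρ / (1 - ρ ^ 2) ^ 2)) ρ := by
  have hρ : ρ ≠ 0 := ne_of_gt h0
  have hq : (1 : ℝ) - ρ ^ 2 ≠ 0 := by nlinarith
  have hlog : HasDerivAt (fun x : ℝ => Real.log x) ρ⁻¹ ρ := Real.hasDerivAt_log hρ
  have hsq : HasDerivAt (fun x : ℝ => 1 - x ^ 2) (-(2 * ρ)) ρ := by
    simpa using ((hasDerivAt_pow 2 ρ).const_sub 1)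
  have hinv : HasDerivAt (fun x : ℝ => 2 / (1 - x ^ 2))
      (2 * (2 * ρ) / (1 - ρ ^ 2) ^ 2) ρ := by
    have h := (hsq.inv hq).const_mul (2 : ℝ)
    simp only [div_eq_mul_inv]
    refine h.congr_deriv ?_
    ring
  have h1' : HasDerivAt (fun x : ℝ => (Real.log r - Real.log x) * (2 / (1 - x ^ 2)))
      ((0 - ρ⁻¹) * (2 / (1 - ρ ^ 2)) + (Real.log r - Real.log ρ) * (2 * (2 * ρ) / (1 - ρ ^ 2) ^ 2)) ρ :=
    (((hasDerivAt_const ρ (Real.log r)).sub hlog)).mul hinv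
  have h2' : HasDerivAt (fun x : ℝ => 2 * Real.log x) (2 * ρ⁻¹) ρ := hlog.const_mul 2
  have h3' : HasDerivAt (fun x : ℝ => Real.log (1 - x ^ 2)) (-(2 * ρ) / (1 - ρ ^ 2)) ρ :=
    hsq.log hq
  have h := (h1'.add h2').sub h3'
  refine h.congr_deriv ?_
  rw [Real.log_div (ne_of_gt hr) hρ]
  field_simp
  ring

lemma my_bound (r ρ : ℝ) (h0 : 0 < ρ) (hρr : ρ < r) (hr : r < 1) :
    -2 ≤ 2 * ρ ^ 2 * (Real.log r - Real.log ρ) / (1 - ρ ^ 2) - 2 * Real.log (1 + ρ) ∧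
    2 * ρ ^ 2 * (Real.log r - Real.log ρ) / (1 - ρ ^ 2) - 2 * Real.log (1 + ρ) ≤ 1 := by
  have h1 : ρ < 1 := hρr.trans hr
  have hq : (0 : ℝ) < 1 - ρ ^ 2 := by nlinarith
  have hlog0 : 0 ≤ Real.log r - Real.log ρ := by
    have := Real.log_le_log h0 hρr.le
    linarith
  have hlogU : Real.log r - Real.log ρ ≤ (1 - ρ) / ρ := by
    have h3 : Real.log r ≤ 0 := Real.log_nonpos (by linarith) hr.le
    have h4 : Real.log ρ⁻¹ ≤ ρ⁻¹ - 1 := Real.log_le_sub_one_of_pos (by positivity)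
    rw [Real.log_inv] at h4
    have : (1 - ρ) / ρ = ρ⁻¹ - 1 := by field_simp
    rw [this]; linarith
  have hT0 : 0 ≤ 2 * ρ ^ 2 * (Real.log r - Real.log ρ) / (1 - ρ ^ 2) := by positivity
  have hT1 : 2 * ρ ^ 2 * (Real.log r - Real.log ρ) / (1 - ρ ^ 2) ≤ 1 := by
    rw [div_le_one hq]
    have : 2 * ρ ^ 2 * (Real.log r - Real.log ρ) ≤ 2 * ρ ^ 2 * ((1 - ρ) / ρ) := by
      apply mul_le_mul_of_nonneg_left hlogU (by positivity)
    have h2 : 2 * ρ ^ 2 * ((1 - ρ) / ρ) = 2 * ρ * (1 - ρ) := by field_simp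
    nlinarith
  have hL0 : 0 ≤ Real.log (1 + ρ) := Real.log_nonneg (by linarith)
  have hL1 : Real.log (1 + ρ) ≤ ρ := by
    have := Real.log_le_sub_one_of_pos (show (0:ℝ) < 1 + ρ by linarith)
    linarith
  constructor <;> nlinarith

/-- the integral `∫_{r₂}^{r₁} log(r/ρ) 4ρ/(1-ρ²)² dρ` differs from
`R₁ - R₂` by at most `3`, where `R_j = log((1+r_j)/(1-r_j))`. -/
theorem stmt_5 (r r₁ r₂ : ℝ) (h2 : 0 < r₂) (h21 : r₂ < r₁) (h1r : r₁ < r) (hr : r < 1) :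
    |(∫ ρ in r₂..r₁, Real.log (r / ρ) * (4 * ρ / (1 - ρ ^ 2) ^ 2))
      - (Real.log ((1 + r₁) / (1 - r₁)) - Real.log ((1 + r₂) / (1 - r₂)))| ≤ 3 := by
  have hr0 : 0 < r := h2.trans (h21.trans h1r)
  have h11 : r₁ < 1 := h1r.trans hr
  have h10 : 0 < r₁ := h2.trans h21
  have h2lt1 : r₂ < 1 := h21.trans h11
  set G : ℝ → ℝ := fun x => (Real.log r - Real.log x) * (2 / (1 - x ^ 2))
        + 2 * Real.log x - Real.log (1 - x ^ 2) with hG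
  have hmem : ∀ ρ ∈ Set.uIcc r₂ r₁, 0 < ρ ∧ ρ < 1 := by
    intro ρ hρ
    rw [Set.uIcc_of_le h21.le] at hρ
    exact ⟨lt_of_lt_of_le h2 hρ.1, lt_of_le_of_lt hρ.2 h11⟩
  have hint : (∫ ρ in r₂..r₁, Real.log (r / ρ) * (4 * ρ / (1 - ρ ^ 2) ^ 2)) = G r₁ - G r₂ := by
    apply intervalIntegral.integral_eq_sub_of_hasDerivAt
    · intro ρ hρ
      obtain ⟨hp0, hp1⟩ := hmem ρ hρ
      exact my_deriv r ρ hr0 hp0 hp1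
    · apply ContinuousOn.intervalIntegrable
      apply ContinuousOn.mul
      · apply ContinuousOn.log
        · exact (continuousOn_const.div continuousOn_id (fun ρ hρ => ne_of_gt (hmem ρ hρ).1))
        · intro ρ hρ
          exact ne_of_gt (div_pos hr0 (hmem ρ hρ).1)
      · apply ContinuousOn.div
        · exact (continuous_const.mul continuous_id).continuousOn
        · exact ((continuous_const.sub (continuous_pow 2)).pow 2).continuousOn
        · intro ρ hρ
          obtain ⟨hp0, hp1⟩ := hmem ρ hρ
          have hq : (1:ℝ) - ρ ^ 2 ≠ 0 := by nlinarith
          exact pow_ne_zero 2 hq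
  have key : ∀ ρ, 0 < ρ → ρ < r →
      G ρ - Real.log ((1 + ρ) / (1 - ρ)) = 2 * Real.log r +
        (2 * ρ ^ 2 * (Real.log r - Real.log ρ) / (1 - ρ ^ 2) - 2 * Real.log (1 + ρ)) := by
    intro ρ h0 hρr
    have h1 : ρ < 1 := hρr.trans hr
    have hp : (0:ℝ) < 1 + ρ := by linarith
    have hm : (0:ℝ) < 1 - ρ := by linarith
    have hq : (0:ℝ) < 1 - ρ ^ 2 := by nlinarith
    rw [hG]
    simp only
    rw [Real.log_div (ne_of_gt hp) (ne_of_gt hm),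
      show (1:ℝ) - ρ ^ 2 = (1 + ρ) * (1 - ρ) by ring,
      Real.log_mul (ne_of_gt hp) (ne_of_gt hm)]
    field_simp [hp.ne', hm.ne']
    ring
  have e1 := key r₁ h10 h1r
  have e2 := key r₂ h2 (h21.trans h1r)
  have b1 := my_bound r r₁ h10 h1r hr
  have b2 := my_bound r r₂ h2 (h21.trans h1r) hr
  rw [hint, abs_le]
  constructor <;> linarith [b1.1, b1.2, b2.1, b2.2]
end

section
/- For every r ∈ (0,1), the integral over the open unit disc 𝔻 ⊆ ℂ of the function ζ ↦ max(log(r/|ζ|), 0) · 4/(1−|ζ|²)² with respect to planar Lebesgue measure equals −2π·log(1−r²). -/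
open MeasureTheory

open Set Real in
lemma stmt6_aux (r : ℝ) (hr : r ∈ Set.Ioo (0 : ℝ) 1) :
    ∫ y in (0:ℝ)..r, (Real.log r - Real.log y) * (4 * y / (1 - y ^ 2) ^ 2) =
      -Real.log (1 - r ^ 2) := by
  obtain ⟨hr0, hr1⟩ := hr
  set D : ℝ → ℝ := fun y => (Real.log r - Real.log y) * (4 * y / (1 - y ^ 2) ^ 2) with hD
  set H : ℝ → ℝ := fun y =>
    (Real.log r - Real.log y) * (2 * y ^ 2 / (1 - y ^ 2)) - Real.log (1 - y ^ 2) with hH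
  have hne : ∀ y : ℝ, y ∈ Set.Icc (0:ℝ) r → (1 : ℝ) - y ^ 2 ≠ 0 := by
    intro y hy
    have h1 : y ^ 2 < 1 := by nlinarith [hy.1, hy.2]
    nlinarith
  -- derivative
  have hderiv : ∀ x ∈ Set.Ioo (0:ℝ) r, HasDerivAt H (D x) x := by
    intro x hx
    have hx0 : (0:ℝ) < x := hx.1
    have hxne : (1:ℝ) - x ^ 2 ≠ 0 := hne x ⟨hx0.le, hx.2.le⟩
    have h1 : HasDerivAt (fun y : ℝ => Real.log r - Real.log y) (-x⁻¹) x := by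
      simpa using ((Real.hasDerivAt_log hx0.ne').const_sub (Real.log r))
    have h2 : HasDerivAt (fun y : ℝ => 2 * y ^ 2 / (1 - y ^ 2))
        ((4 * x * (1 - x ^ 2) - 2 * x ^ 2 * (-(2 * x))) / (1 - x ^ 2) ^ 2) x := by
      have hu : HasDerivAt (fun y : ℝ => 2 * y ^ 2) (4 * x) x := by
        have h := (hasDerivAt_pow 2 x).const_mul (2:ℝ)
        refine h.congr_deriv ?_
        push_cast
        ring
      have hv : HasDerivAt (fun y : ℝ => 1 - y ^ 2) (-(2 * x)) x := by
        simpa using ((hasDerivAt_pow 2 x).const_sub (1:ℝ))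
      exact hu.div hv hxne
    have h3 : HasDerivAt (fun y : ℝ => Real.log (1 - y ^ 2)) (-(2 * x) / (1 - x ^ 2)) x := by
      have hv : HasDerivAt (fun y : ℝ => 1 - y ^ 2) (-(2 * x)) x := by
        simpa using ((hasDerivAt_pow 2 x).const_sub (1:ℝ))
      simpa using hv.log hxne
    have := (h1.mul h2).sub h3
    refine this.congr_deriv ?_
    rw [hD]
    field_simp
    ring
  -- integrability
  have hGc : D = fun y => Real.log r * (4 * y / (1 - y ^ 2) ^ 2)
      - (y * Real.log y) * (4 / (1 - y ^ 2) ^ 2) := by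
    funext y; rw [hD]; ring
  have hcont2 : ContinuousOn (fun y : ℝ => (1 - y ^ 2) ^ 2) (Set.Icc 0 r) := by fun_prop
  have hne2 : ∀ y ∈ Set.Icc (0:ℝ) r, ((1:ℝ) - y ^ 2) ^ 2 ≠ 0 := fun y hy => pow_ne_zero _ (hne y hy)
  have hcontD : ContinuousOn D (Set.Icc 0 r) := by
    rw [hGc]
    apply ContinuousOn.sub
    · exact continuousOn_const.mul (((continuous_const.mul continuous_id').continuousOn).div hcont2 hne2)
    · exact (Real.continuous_mul_log.continuousOn).mul (continuousOn_const.div hcont2 hne2)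
  have hint : IntervalIntegrable D volume 0 r := by
    apply ContinuousOn.intervalIntegrable
    rwa [Set.uIcc_of_le hr0.le]
  -- limits
  have hHc : H = fun y => Real.log r * (2 * y ^ 2 / (1 - y ^ 2))
      - (y * Real.log y) * (2 * y / (1 - y ^ 2)) - Real.log (1 - y ^ 2) := by
    funext y; rw [hH]; ring
  have hlim0 : Filter.Tendsto H (nhdsWithin 0 (Set.Ioi 0)) (nhds 0) := by
    have hc : ContinuousAt H 0 := by
      rw [hHc]
      have h10 : ((1:ℝ) - (0:ℝ) ^ 2) ≠ 0 := by norm_num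
      apply ContinuousAt.sub
      apply ContinuousAt.sub
      · exact continuousAt_const.mul (((continuous_const.mul (continuous_pow 2)).continuousAt).div
          ((continuous_const.sub (continuous_pow 2)).continuousAt) h10)
      · exact (Real.continuous_mul_log.continuousAt).mul
          (((continuous_const.mul continuous_id').continuousAt).div
          ((continuous_const.sub (continuous_pow 2)).continuousAt) h10)
      · exact ((continuous_const.sub (continuous_pow 2)).continuousAt).log h10
    have h : Filter.Tendsto H (nhdsWithin 0 (Set.Ioi 0)) (nhds (H 0)) := hc.continuousWithinAt
    have hH0 : H 0 = 0 := by simp [hH]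
    rwa [hH0] at h
  have hlimr : Filter.Tendsto H (nhdsWithin r (Set.Iio r)) (nhds (-Real.log (1 - r ^ 2))) := by
    have hrne : (1:ℝ) - r ^ 2 ≠ 0 := hne r ⟨hr0.le, le_refl r⟩
    have hc : ContinuousAt H r := by
      rw [hH]
      apply ContinuousAt.sub
      · exact (continuousAt_const.sub (Real.continuousAt_log hr0.ne')).mul
          (((continuous_const.mul (continuous_pow 2)).continuousAt).div
          ((continuous_const.sub (continuous_pow 2)).continuousAt) hrne)
      · exact ((continuous_const.sub (continuous_pow 2)).continuousAt).log hrne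
    have h : Filter.Tendsto H (nhdsWithin r (Set.Iio r)) (nhds (H r)) := hc.continuousWithinAt
    have hHr : H r = -Real.log (1 - r ^ 2) := by simp [hH]
    rwa [hHr] at h
  have := intervalIntegral.integral_eq_sub_of_hasDerivAt_of_tendsto hr0 hderiv hint hlim0 hlimr
  rw [this]; ring

/-- the Poincaré mass `M_R = ∫_𝔻 log⁺(r/|ζ|) g_P = -2π log(1-r²)`. -/
theorem stmt_6 (r : ℝ) (hr : r ∈ Set.Ioo (0 : ℝ) 1) :
    ∫ ζ in {z : ℂ | ‖z‖ < 1},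
        max (Real.log (r / ‖ζ‖)) 0 * (4 / (1 - ‖ζ‖ ^ 2) ^ 2) =
      -(2 * Real.pi * Real.log (1 - r ^ 2)) := by
  obtain ⟨hr0, hr1⟩ := hr
  set f : ℝ → ℝ := fun s => max (Real.log (r / s)) 0 * (4 / (1 - s ^ 2) ^ 2) with hf
  -- extend to whole plane
  have h1 : ∫ ζ in {z : ℂ | ‖z‖ < 1},
      max (Real.log (r / ‖ζ‖)) 0 * (4 / (1 - ‖ζ‖ ^ 2) ^ 2)
      = ∫ ζ : ℂ, f ‖ζ‖ := by
    rw [show (fun ζ : ℂ => max (Real.log (r / ‖ζ‖)) 0 * (4 / (1 - ‖ζ‖ ^ 2) ^ 2))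
        = fun ζ : ℂ => f ‖ζ‖ from rfl]
    apply setIntegral_eq_integral_of_forall_compl_eq_zero
    intro ζ hζ
    simp only [Set.mem_setOf_eq, not_lt] at hζ
    have habs : (0:ℝ) < ‖ζ‖ := lt_of_lt_of_le one_pos hζ
    have : Real.log (r / ‖ζ‖) ≤ 0 := by
      apply Real.log_nonpos
      · exact div_nonneg hr0.le habs.le
      · rw [div_le_one habs]; linarith
    simp [hf, max_eq_right this]
  rw [h1, integral_fun_norm_addHaar volume f, Complex.finrank_real_complex]
  have hvol : volume.real (Metric.ball (0:ℂ) 1) = Real.pi := by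
    simp [Measure.real, Complex.volume_ball]
  rw [hvol]
  -- reduce radial integral
  have h2 : ∫ y in Set.Ioi (0:ℝ), y ^ (2 - 1) • f y
      = ∫ y in (0:ℝ)..r, (Real.log r - Real.log y) * (4 * y / (1 - y ^ 2) ^ 2) := by
    rw [show (2 - 1 : ℕ) = 1 from rfl]
    have hsub : Set.Ioc (0:ℝ) r ⊆ Set.Ioi 0 := Set.Ioc_subset_Ioi_self
    rw [setIntegral_eq_of_subset_of_forall_diff_eq_zero measurableSet_Ioi hsub ?_,
      intervalIntegral.integral_of_le hr0.le]
    · apply setIntegral_congr_fun measurableSet_Ioc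
      intro y hy
      have hy0 : 0 < y := hy.1
      have hpos : 0 ≤ Real.log (r / y) := by
        apply Real.log_nonneg
        rw [le_div_iff₀ hy0]; linarith [hy.2]
      simp only [pow_one, smul_eq_mul, hf]
      rw [max_eq_left hpos, Real.log_div hr0.ne' hy0.ne']
      ring
    · intro y hy
      simp only [Set.mem_diff, Set.mem_Ioi, Set.mem_Ioc, not_and, not_le] at hy
      have hry : r < y := hy.2 hy.1
      have hmax : max (Real.log (r / y)) 0 = 0 := by
        apply max_eq_right
        apply Real.log_nonpos
        · exact div_nonneg hr0.le (lt_trans hr0 hry).le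
        · rw [div_le_one (lt_trans hr0 hry)]; linarith
      simp [hf, hmax]
  rw [h2, stmt6_aux r ⟨hr0, hr1⟩]
  simp only [smul_eq_mul, nsmul_eq_mul, Nat.cast_ofNat]
  ring
end

section
/- There exists ε₀ ∈ (0,1) such that for all reals ε₁, ε₂ with 0 < ε₁ ≤ ε₂/16 and ε₂ ≤ ε₀, every θ ∈ ℝ and every ξ ∈ 𝔻 with |ξ| ≥ 1/4: if 8·ε₂⁻¹·|sin(θ/2)| ≤ 1−|ξ|² ≤ (1/2)·ε₁⁻¹·|sin(θ/2)|, then the Poincaré distance d_P(ξ, e^{iθ}ξ) lies in the closed interval [ε₁, ε₂]. -/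
/-- The inverse hyperbolic tangent. -/
noncomputable def artanh (x : ℝ) : ℝ := Real.log ((1 + x) / (1 - x)) / 2

/-- The Poincaré distance on the unit disc. -/
noncomputable def dP (z w : ℂ) : ℝ :=
  2 * artanh (‖z - w‖ / ‖1 - (starRingEnd ℂ) w * z‖)

lemma artanh_le_div (t : ℝ) (h0 : 0 ≤ t) (h1 : t < 1) : artanh t ≤ t / (1 - t) := by
  unfold artanh
  have h2 : (0:ℝ) < 1 - t := by linarith
  have h4 : (0:ℝ) < (1 + t) / (1 - t) := by positivity
  have h5 := Real.log_le_sub_one_of_pos h4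
  have h6 : (1 + t) / (1 - t) - 1 = 2 * (t / (1 - t)) := by field_simp; ring
  rw [h6] at h5
  linarith

lemma le_artanh (t : ℝ) (h0 : 0 ≤ t) (h1 : t < 1) : t / (1 + t) ≤ artanh t := by
  unfold artanh
  have h2 : (0:ℝ) < 1 - t := by linarith
  have h3 : (0:ℝ) < 1 + t := by linarith
  have h4 : (0:ℝ) < (1 - t) / (1 + t) := by positivity
  have h5 := Real.log_le_sub_one_of_pos h4
  have h6 : Real.log ((1 - t) / (1 + t)) = - Real.log ((1 + t) / (1 - t)) := by
    rw [← Real.log_inv]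
    congr 1
    field_simp
  rw [h6] at h5
  have h7 : (1 - t) / (1 + t) - 1 = -(2 * t / (1 + t)) := by field_simp; ring
  rw [h7] at h5
  have h8 : 2 * t / (1 + t) = 2 * (t / (1 + t)) := by rw [mul_div_assoc]
  linarith [h8 ▸ h5]

set_option maxHeartbeats 2000000 in
/-- if `8 ε₂⁻¹ |sin(θ/2)| ≤ 1-|ξ|² ≤ (1/2) ε₁⁻¹ |sin(θ/2)|` and
`|ξ| ≥ 1/4`, then `d_P(ξ, e^{iθ}ξ) ∈ [ε₁, ε₂]`. -/
theorem stmt_9 :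
    ∃ ε₀ ∈ Set.Ioo (0 : ℝ) 1, ∀ ε₁ ε₂ : ℝ, 0 < ε₁ → ε₁ ≤ ε₂ / 16 → ε₂ ≤ ε₀ →
      ∀ θ : ℝ, ∀ ξ : ℂ, ‖ξ‖ < 1 → 1 / 4 ≤ ‖ξ‖ →
        8 * ε₂⁻¹ * |Real.sin (θ / 2)| ≤ 1 - ‖ξ‖ ^ 2 →
        1 - ‖ξ‖ ^ 2 ≤ (1 / 2) * ε₁⁻¹ * |Real.sin (θ / 2)| →
        dP ξ (Complex.exp (θ * Complex.I) * ξ) ∈ Set.Icc ε₁ ε₂ := by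
  refine ⟨1/2, ⟨by norm_num, by norm_num⟩, ?_⟩
  intro ε₁ ε₂ hε₁ h12 hε₂0 θ ξ hξ1 hξ4 hlow hhigh
  set r := ‖ξ‖ with hr
  set s := |Real.sin (θ/2)| with hs
  set δ := 1 - r^2 with hδdef
  have hε₂pos : 0 < ε₂ := by linarith
  have hr0 : 0 ≤ r := norm_nonneg ξ
  have hδpos : 0 < δ := by nlinarith
  have hs0 : 0 ≤ s := abs_nonneg _
  -- rearranged hypotheses
  have hlow' : 8 * s ≤ ε₂ * δ := by
    have h1 : (8*s) * ε₂⁻¹ ≤ δ := by linarith [hlow]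
    have h2 : (8*s)/ε₂ ≤ δ := by rw [div_eq_mul_inv]; exact h1
    have := (div_le_iff₀ hε₂pos).mp h2
    linarith
  have hhigh' : 2 * ε₁ * δ ≤ s := by
    have h1 : δ ≤ s * (2*ε₁)⁻¹ := by
      have : (1/2) * ε₁⁻¹ * s = s * (2*ε₁)⁻¹ := by
        rw [mul_inv]; ring
      linarith [this ▸ hhigh]
    have h2 : δ ≤ s / (2*ε₁) := by rw [div_eq_mul_inv]; exact h1
    have := (le_div_iff₀ (by positivity : (0:ℝ) < 2*ε₁)).mp h2
    linarith
  have hspos : 0 < s := by nlinarith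
  have hs16 : s ≤ δ/16 := by nlinarith
  have hr1 : r ≤ 1 := le_of_lt hξ1
  -- trig identity
  have hhalf : s^2 = (1 - Real.cos θ)/2 := by
    have h1 := Real.cos_two_mul (θ/2)
    have h2 := Real.sin_sq_add_cos_sq (θ/2)
    have h3 : (2:ℝ)*(θ/2) = θ := by ring
    rw [h3] at h1
    rw [hs, sq_abs]
    linarith
  have hexp : Complex.exp ((θ:ℂ) * Complex.I) = (Real.cos θ : ℂ) + (Real.sin θ : ℂ) * Complex.I := by
    rw [Complex.exp_mul_I (θ:ℂ), Complex.ofReal_cos, Complex.ofReal_sin]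
  -- numerator
  have hA : ‖ξ - Complex.exp (θ*Complex.I) * ξ‖ = 2 * s * r := by
    have h1 : ξ - Complex.exp (θ*Complex.I)*ξ = (1 - Complex.exp (θ*Complex.I)) * ξ := by ring
    rw [h1, norm_mul]
    congr 1
    rw [hexp]
    have h2 : (1:ℂ) - ((Real.cos θ:ℂ) + (Real.sin θ:ℂ)*Complex.I)
        = ((1 - Real.cos θ : ℝ) : ℂ) + ((-(Real.sin θ) : ℝ):ℂ) * Complex.I := by
      push_cast; ring
    rw [h2, Complex.norm_add_mul_I]
    rw [show ((1-Real.cos θ)^2 + (-Real.sin θ)^2) = (2*s)^2 from by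
      linear_combination Real.sin_sq_add_cos_sq θ - 4*hhalf]
    exact Real.sqrt_sq (by positivity)
  -- denominator
  have hB2 : (‖1 - (starRingEnd ℂ) (Complex.exp (θ*Complex.I) * ξ) * ξ‖)^2
      = δ^2 + 4*r^2*s^2 := by
    have hns : ((starRingEnd ℂ) ξ) * ξ = ((r^2 : ℝ) : ℂ) := by
      rw [← Complex.normSq_eq_conj_mul_self, Complex.normSq_eq_norm_sq]
    have h1 : 1 - (starRingEnd ℂ) (Complex.exp (θ*Complex.I) * ξ) * ξ
        = ((1 - r^2*Real.cos θ : ℝ):ℂ) + ((r^2*Real.sin θ : ℝ):ℂ) * Complex.I := by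
      rw [map_mul, mul_assoc, hns, hexp]
      simp only [map_add, map_mul, Complex.conj_I, Complex.conj_ofReal]
      push_cast
      ring
    rw [h1, Complex.norm_add_mul_I, Real.sq_sqrt (by positivity), hδdef]
    linear_combination (r^2*r^2) * Real.sin_sq_add_cos_sq θ - 4*r^2 * hhalf
  set B := ‖1 - (starRingEnd ℂ) (Complex.exp (θ*Complex.I) * ξ) * ξ‖ with hBdef
  have hB0 : 0 ≤ B := norm_nonneg _
  have hBl : δ ≤ B := by nlinarith [hB2, sq_nonneg (r*s)]
  have hBu : B ≤ 9/8 * δ := by nlinarith [hB2, hs16, hr1, hs0, hδpos]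
  have hBpos : 0 < B := lt_of_lt_of_le hδpos hBl
  -- the argument of artanh
  have hdp : dP ξ (Complex.exp (θ * Complex.I) * ξ) = 2 * artanh ((2*s*r)/B) := by
    rw [dP, hA]
  set t := (2*s*r)/B with htdef
  have ht0 : 0 ≤ t := by positivity
  have htu : t ≤ ε₂/4 := by
    have hAle : 2*s*r ≤ ε₂*δ/4 := by nlinarith
    have := div_le_div₀ (by positivity : (0:ℝ) ≤ ε₂*δ/4) hAle hδpos hBl
    calc t ≤ (ε₂*δ/4)/δ := this
    _ = ε₂/4 := by field_simp
  have htl : (8/9)*ε₁ ≤ t := by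
    have hAge : ε₁*δ ≤ 2*s*r := by nlinarith
    have := div_le_div₀ (by positivity : (0:ℝ) ≤ 2*s*r) hAge hBpos hBu
    calc (8/9)*ε₁ = (ε₁*δ)/(9/8*δ) := by field_simp
    _ ≤ t := this
  have ht18 : t ≤ 1/8 := by linarith
  have ht1 : t < 1 := by linarith
  constructor
  · -- lower bound
    have l1 := le_artanh t ht0 ht1
    have l2 : (8/9)*t ≤ t/(1+t) := by
      rw [le_div_iff₀ (by linarith : (0:ℝ) < 1+t)]
      nlinarith
    rw [hdp]
    have : (8/9)*((8/9)*ε₁) ≤ (8/9)*t := by nlinarith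
    nlinarith
  · -- upper bound
    have u1 := artanh_le_div t ht0 ht1
    have u2 : t/(1-t) ≤ (8/7)*t := by
      rw [div_le_iff₀ (by linarith : (0:ℝ) < 1-t)]
      nlinarith
    rw [hdp]
    nlinarith
end

section
/- For every ε ∈ (0, 1/2], every R ≥ 0, every θ ∈ ℝ with |sin(θ/2)| ≤ (ε/4)·e^{−R}, and every ξ ∈ 𝔻 with |ξ| ≤ (e^R−1)/(e^R+1), the Poincaré distance satisfies d_P(ξ, e^{iθ}ξ) ≤ 2ε. -/
lemma abs_one_sub_exp (θ : ℝ) :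
    ‖1 - Complex.exp (θ * Complex.I)‖ = 2 * |Real.sin (θ / 2)| := by
  have h : (‖1 - Complex.exp (θ * Complex.I)‖)^2 =
      (2 * |Real.sin (θ / 2)|)^2 := by
    rw [← Complex.normSq_eq_norm_sq]
    rw [Complex.exp_mul_I]
    have hc : Real.cos θ = 1 - 2 * Real.sin (θ / 2) ^ 2 := by
      have h2 : Real.cos (2 * (θ / 2)) = 2 * Real.cos (θ / 2) ^ 2 - 1 := Real.cos_two_mul _
      have h3 : Real.cos (θ / 2) ^ 2 = 1 - Real.sin (θ / 2) ^ 2 := Real.cos_sq' _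
      rw [show 2 * (θ / 2) = θ by ring] at h2
      linarith
    simp [Complex.normSq_apply, Complex.cos_ofReal_re, Complex.sin_ofReal_re,
      Complex.cos_ofReal_im, Complex.sin_ofReal_im, Complex.ofReal_cos, Complex.ofReal_sin]
    rw [mul_pow, sq_abs]
    have hs := Real.sin_sq_add_cos_sq θ
    nlinarith [hs, hc]
  have h1 : (0:ℝ) ≤ ‖1 - Complex.exp (θ * Complex.I)‖ := norm_nonneg _
  have h2 : (0:ℝ) ≤ 2 * |Real.sin (θ / 2)| := by positivity
  nlinarith [h, h1, h2]

lemma artanh_le (t : ℝ) (h0 : 0 ≤ t) (h1 : t ≤ 1/2) : artanh t ≤ 2 * t := by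
  unfold artanh
  have hlog : Real.log ((1 + t) / (1 - t)) ≤ 4 * t := by
    have hd : (0:ℝ) < 1 - t := by linarith
    have h2 : (1 + t) / (1 - t) ≤ 1 + 4 * t := by
      rw [div_le_iff₀ hd]; nlinarith
    have h3 : (1:ℝ) + 4 * t ≤ Real.exp (4 * t) := by
      have := Real.add_one_le_exp (4 * t); linarith
    calc Real.log ((1 + t) / (1 - t)) ≤ Real.log (Real.exp (4 * t)) := by
          apply Real.log_le_log (by positivity)
          linarith
      _ = 4 * t := Real.log_exp _
  linarith

/-- if `|sin(θ/2)| ≤ (ε/4) e^{-R}` then `d_P(ξ, e^{iθ}ξ) ≤ 2ε` on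
the closed hyperbolic disk of radius `R`. -/
theorem stmt_12 (ε : ℝ) (hε : ε ∈ Set.Ioc (0 : ℝ) (1 / 2)) (R : ℝ) (hR : 0 ≤ R)
    (θ : ℝ) (hθ : |Real.sin (θ / 2)| ≤ (ε / 4) * Real.exp (-R))
    (ξ : ℂ) (hξ : ‖ξ‖ ≤ (Real.exp R - 1) / (Real.exp R + 1)) :
    dP ξ (Complex.exp (θ * Complex.I) * ξ) ≤ 2 * ε := by
  obtain ⟨hε0, hε2⟩ := hε
  set E := Real.exp R with hE
  have hE1 : 1 ≤ E := by rw [hE]; simpa using Real.exp_le_exp.2 hR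
  set a := ‖ξ‖ with ha
  have ha0 : 0 ≤ a := norm_nonneg _
  set r := (E - 1) / (E + 1) with hr
  have hEpos : (0:ℝ) < E + 1 := by linarith
  have hr1 : r < 1 := by rw [hr, div_lt_one hEpos]; linarith
  have ha1 : a < 1 := lt_of_le_of_lt hξ hr1
  set s := |Real.sin (θ / 2)| with hs
  have hs0 : 0 ≤ s := abs_nonneg _
  -- numerator
  have hnum : ‖ξ - Complex.exp (θ * Complex.I) * ξ‖ = 2 * s * a := by
    have : ξ - Complex.exp (θ * Complex.I) * ξ = (1 - Complex.exp (θ * Complex.I)) * ξ := by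
      ring
    rw [this, norm_mul, abs_one_sub_exp]
  -- denominator
  have hden : 1 - a^2 ≤
      ‖1 - (starRingEnd ℂ) (Complex.exp (θ * Complex.I) * ξ) * ξ‖ := by
    have habs : ‖(starRingEnd ℂ) (Complex.exp (θ * Complex.I) * ξ) * ξ‖ = a^2 := by
      rw [norm_mul, Complex.norm_conj, norm_mul, Complex.norm_exp_ofReal_mul_I]
      ring
    calc 1 - a^2 = ‖(1:ℂ)‖ -
          ‖(starRingEnd ℂ) (Complex.exp (θ * Complex.I) * ξ) * ξ‖ := by
          rw [habs, norm_one]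
      _ ≤ _ := norm_sub_norm_le 1 _
  have hden0 : 0 < 1 - a^2 := by nlinarith
  -- key inequality: 4*a ≤ E*(1 - a^2)
  have hkey : 4 * a ≤ E * (1 - a^2) := by
    have haE : a * (E + 1) ≤ E - 1 := by
      rw [← le_div_iff₀ hEpos] at *; exact hξ
    have hc : 0 ≤ (E - 1) - a * (E + 1) := by linarith
    have hcb : (E - 1) - a * (E + 1) ≤ E - 1 := by nlinarith
    nlinarith [hc, hcb, ha0, hE1, mul_nonneg hc hc, mul_nonneg hc (by linarith : (0:ℝ) ≤ E - 1),
      mul_nonneg (mul_nonneg hc (by linarith : (0:ℝ) ≤ E - 1)) (by linarith : (0:ℝ) ≤ E)]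
  -- bound the quotient
  set t := ‖ξ - Complex.exp (θ * Complex.I) * ξ‖ /
      ‖1 - (starRingEnd ℂ) (Complex.exp (θ * Complex.I) * ξ) * ξ‖ with ht
  have htnn : 0 ≤ t := by positivity
  have hEinv : Real.exp (-R) = 1 / E := by rw [Real.exp_neg]; field_simp; exact hE
  have ht2 : t ≤ ε / 8 := by
    rw [ht, hnum, div_le_iff₀ (lt_of_lt_of_le hden0 hden)]
    have hnb : 2 * s * a ≤ (ε / 8) * (1 - a^2) := by
      have h1 : s ≤ (ε / 4) * (1 / E) := by rw [← hEinv]; exact hθ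
      have hEp : (0:ℝ) < E := by linarith
      have h2 : 2 * s * a ≤ 2 * ((ε / 4) * (1 / E)) * a := by
        apply mul_le_mul_of_nonneg_right _ ha0
        linarith
      have h3 : 2 * ((ε / 4) * (1 / E)) * a ≤ (ε / 8) * (1 - a^2) := by
        have hE0 : E ≠ 0 := ne_of_gt hEp
        have hm := mul_le_mul_of_nonneg_left hkey (by positivity : (0:ℝ) ≤ ε / (8 * E))
        have e1 : ε / (8 * E) * (4 * a) = 2 * ((ε / 4) * (1 / E)) * a := by
          field_simp; ring
        have e2 : ε / (8 * E) * (E * (1 - a^2)) = (ε / 8) * (1 - a^2) := by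
          field_simp
        rw [e1, e2] at hm; exact hm
      linarith
    calc 2 * s * a ≤ (ε / 8) * (1 - a^2) := hnb
      _ ≤ ε / 8 * ‖1 - (starRingEnd ℂ) (Complex.exp (θ * Complex.I) * ξ) * ξ‖ := by
          apply mul_le_mul_of_nonneg_left hden (by linarith)
  have ht12 : t ≤ 1/2 := by linarith
  unfold dP
  have := artanh_le t htnn ht12
  rw [← ht]
  linarith
end

section
/- There exists δ > 0 such that for all ζ₁, ζ₂ ∈ ℂ with |ζ₁| < δ and |ζ₂| < δ and all θ₁, θ₂ ∈ ℝ, there exist ζ in the open unit disc 𝔻 and θ ∈ ℝ satisfying (1/2)·max(|ζ₁−ζ₂|, |θ₁−θ₂|) ≤ max(|ζ|, |θ|) ≤ 3·max(|ζ₁−ζ₂|, |θ₁−θ₂|) and such that (τ_{ζ₁} ∘ r_{θ₁})⁻¹ ∘ (τ_{ζ₂} ∘ r_{θ₂}) = τ_ζ ∘ r_θ as maps of 𝔻; equivalently, for every ξ ∈ 𝔻, τ_{ζ₂}(e^{iθ₂}·ξ) = τ_{ζ₁}(e^{iθ₁}·τ_ζ(e^{iθ}·ξ)). -/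
/-- The Möbius automorphism `τ_ζ(ξ) = (ξ + ζ)/(1 + conj(ζ) ξ)` of the unit disc. -/
noncomputable def moebius (ζ ξ : ℂ) : ℂ := (ξ + ζ) / (1 + (starRingEnd ℂ) ζ * ξ)

open Complex

lemma one_add_ne (a : ℂ) (h : ‖a‖ < 1) : 1 + a ≠ 0 := by
  intro h0
  have ha : a = -1 := by linear_combination h0
  simp [ha] at h

lemma key_normSq (ζ ξ : ℂ) :
    Complex.normSq (1 + (starRingEnd ℂ) ζ * ξ) - Complex.normSq (ξ + ζ)
      = (1 - Complex.normSq ζ) * (1 - Complex.normSq ξ) := by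
  simp only [Complex.normSq_apply, Complex.add_re, Complex.add_im, Complex.mul_re,
    Complex.mul_im, Complex.one_re, Complex.one_im, Complex.conj_re, Complex.conj_im]
  ring

lemma moebius_abs_lt (ζ ξ : ℂ) (hζ : ‖ζ‖ < 1) (hξ : ‖ξ‖ < 1) :
    ‖moebius ζ ξ‖ < 1 := by
  have hne : 1 + (starRingEnd ℂ) ζ * ξ ≠ 0 := by
    apply one_add_ne
    rw [norm_mul, Complex.norm_conj]
    nlinarith [norm_nonneg ζ, norm_nonneg ξ]
  have h1 : Complex.normSq ζ < 1 := by
    rw [← Complex.sq_norm] at *; nlinarith [norm_nonneg ζ]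
  have h2 : Complex.normSq ξ < 1 := by
    rw [← Complex.sq_norm] at *; nlinarith [norm_nonneg ξ]
  have key := key_normSq ζ ξ
  have hlt : Complex.normSq (ξ + ζ) < Complex.normSq (1 + (starRingEnd ℂ) ζ * ξ) := by
    nlinarith
  rw [moebius, norm_div, div_lt_one (norm_pos_iff.mpr hne)]
  have := Complex.sq_norm (ξ + ζ)
  have := Complex.sq_norm (1 + (starRingEnd ℂ) ζ * ξ)
  nlinarith [norm_nonneg (ξ + ζ), norm_nonneg (1 + (starRingEnd ℂ) ζ * ξ)]



lemma mdiv_helper (a b c e : ℂ) (hb : b ≠ 0) (hc : c ≠ 0) (he : e ≠ 0) :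
    (c * a / e) / (c * b / e) = a / b := by
  field_simp

set_option maxHeartbeats 1000000 in
/-- `(τ_{ζ₁} ∘ r_{θ₁})⁻¹ ∘ (τ_{ζ₂} ∘ r_{θ₂}) = τ_ζ ∘ r_θ` with
`max(|ζ|,|θ|)` comparable to `max(|ζ₁-ζ₂|, |θ₁-θ₂|)`. -/
theorem stmt_14 :
    ∃ δ : ℝ, 0 < δ ∧
      ∀ ζ₁ ζ₂ : ℂ, ‖ζ₁‖ < δ → ‖ζ₂‖ < δ → ∀ θ₁ θ₂ : ℝ,
        ∃ ζ : ℂ, ∃ θ : ℝ, ‖ζ‖ < 1 ∧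
          (1 / 2) * max (‖ζ₁ - ζ₂‖) |θ₁ - θ₂|
              ≤ max (‖ζ‖) |θ| ∧
          max (‖ζ‖) |θ| ≤ 3 * max (‖ζ₁ - ζ₂‖) |θ₁ - θ₂| ∧
          ∀ ξ : ℂ, ‖ξ‖ < 1 →
            moebius ζ₂ (Complex.exp (θ₂ * Complex.I) * ξ) =
              moebius ζ₁ (Complex.exp (θ₁ * Complex.I) *
                moebius ζ (Complex.exp (θ * Complex.I) * ξ)) := by
  refine ⟨1/16, by norm_num, fun ζ₁ ζ₂ h1 h2 θ₁ θ₂ => ?_⟩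
  have hζ₁0 := norm_nonneg ζ₁
  have hζ₂0 := norm_nonneg ζ₂
  set w1 := (starRingEnd ℂ) ζ₁ with hw1
  set w2 := (starRingEnd ℂ) ζ₂ with hw2
  set q : ℂ := 1 - w1 * ζ₂ with hqdef
  set q' : ℂ := 1 - ζ₁ * w2 with hq'def
  set E1 := Complex.exp ((θ₁ : ℂ) * Complex.I) with hE1def
  set E2 := Complex.exp ((θ₂ : ℂ) * Complex.I) with hE2def
  set d := ‖ζ₁ - ζ₂‖ with hddef
  set t := |θ₁ - θ₂| with htdef
  have hd0 : 0 ≤ d := norm_nonneg _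
  have ht0 : 0 ≤ t := abs_nonneg _
  have habsw1 : ‖w1‖ = ‖ζ₁‖ := Complex.norm_conj ζ₁
  have habsw2 : ‖w2‖ = ‖ζ₂‖ := Complex.norm_conj ζ₂
  -- bounds on d
  have hdle : d ≤ 1/4 := by
    have := norm_add_le ζ₁ (-ζ₂)
    rw [norm_neg, ← sub_eq_add_neg] at this
    rw [hddef]; linarith
  -- bounds on |q|
  have hwprod : ‖w1 * ζ₂‖ ≤ 1/256 := by
    rw [norm_mul, habsw1]; nlinarith
  have hqub : ‖q‖ ≤ 2 := by
    have := norm_add_le 1 (-(w1 * ζ₂))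
    rw [norm_neg] at this
    rw [hqdef, sub_eq_add_neg]
    simp only [norm_one] at this
    linarith
  have hqlb : 1/2 ≤ ‖q‖ := by
    have h := norm_add_le q (w1 * ζ₂)
    have : q + w1 * ζ₂ = 1 := by rw [hqdef]; ring
    rw [this, norm_one] at h
    linarith
  have hq0 : q ≠ 0 := by
    intro h; rw [h, norm_zero] at hqlb; linarith
  have hq'q : q' = (starRingEnd ℂ) q := by
    rw [hqdef, hq'def, hw1, hw2]; simp
  have hq'0 : q' ≠ 0 := by
    rw [hq'q]; simpa using hq0
  have habsq' : ‖q'‖ = ‖q‖ := by rw [hq'q, Complex.norm_conj]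
  -- the rotation factor λ = q'/q
  have habsl : ‖q' / q‖ = 1 := by
    rw [norm_div, habsq', div_self (norm_ne_zero_iff.mpr hq0)]
  have hlsub : ‖q' / q - 1‖ ≤ d / 4 := by
    have hnum : q' - q = w1 * (ζ₂ - ζ₁) + ζ₁ * (w1 - w2) := by
      rw [hqdef, hq'def]; ring
    have h21 : ‖ζ₂ - ζ₁‖ = d := by rw [hddef, norm_sub_rev]
    have hw12 : ‖w1 - w2‖ = d := by
      rw [hw1, hw2, ← map_sub, Complex.norm_conj, hddef]
    have habsnum : ‖q' - q‖ ≤ d / 8 := by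
      calc ‖q' - q‖ ≤ ‖w1 * (ζ₂ - ζ₁)‖ + ‖ζ₁ * (w1 - w2)‖ := by
            rw [hnum]; exact norm_add_le _ _
        _ ≤ d / 8 := by rw [norm_mul, norm_mul, habsw1, h21, hw12]; nlinarith
    have : q' / q - 1 = (q' - q) / q := by field_simp
    rw [this, norm_div, div_le_iff₀ (norm_pos_iff.mpr hq0)]
    nlinarith
  -- the angle φ
  set φ := (q' / q).arg with hφdef
  have hre : 0 < (q' / q).re := by
    have := Complex.abs_re_le_norm (q' / q - 1)
    have hre1 : (q' / q - 1).re = (q' / q).re - 1 := by simp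
    rw [hre1] at this
    have := abs_le.mp (this.trans hlsub)
    linarith
  have hφlt : |φ| < Real.pi / 2 := Complex.abs_arg_lt_pi_div_two_iff.mpr (Or.inl hre)
  have him : |(q' / q).im| ≤ d / 4 := by
    have := Complex.abs_im_le_norm (q' / q - 1)
    have : |(q' / q).im| ≤ ‖q' / q - 1‖ := by simpa using this
    linarith
  have hφle : |φ| ≤ d / 2 := by
    have hsin : Real.sin φ = (q' / q).im := by
      rw [hφdef, Complex.sin_arg, habsl, div_one]
    have hms := Real.mul_le_sin (abs_nonneg φ) hφlt.le
    have hsa : Real.sin |φ| ≤ |Real.sin φ| := by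
      rcases abs_cases φ with ⟨h, _⟩ | ⟨h, _⟩
      · rw [h]; exact le_abs_self _
      · rw [h, Real.sin_neg]; exact neg_le_abs _
    rw [hsin] at hsa
    have hπ := Real.pi_le_four
    have hπ0 := Real.pi_pos
    have h1 : 2 / Real.pi * |φ| ≤ d / 4 := le_trans (hms.trans hsa) him
    have h2 : |φ| ≤ Real.pi * d / 8 := by
      rw [div_mul_eq_mul_div, div_le_iff₀ hπ0] at h1
      linarith
    nlinarith [abs_nonneg φ]
  -- define ζ and θ
  have habsζ : ‖E1⁻¹ * (ζ₂ - ζ₁) / q‖ = d / ‖q‖ := by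
    rw [norm_div, norm_mul, norm_inv, hE1def, Complex.norm_exp_ofReal_mul_I,
      norm_sub_rev ζ₂ ζ₁, ← hddef, inv_one, one_mul]
  have hζub : ‖E1⁻¹ * (ζ₂ - ζ₁) / q‖ ≤ 2 * d := by
    rw [habsζ, div_le_iff₀ (by linarith)]; nlinarith
  have hζlb : d / 2 ≤ ‖E1⁻¹ * (ζ₂ - ζ₁) / q‖ := by
    rw [habsζ]
    calc d / 2 = d / 2 := rfl
      _ ≤ d / ‖q‖ := by gcongr <;> linarith
  have hθub : |φ + θ₂ - θ₁| ≤ t + d / 2 := by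
    have : φ + θ₂ - θ₁ = φ + (θ₂ - θ₁) := by ring
    rw [this]
    have h := abs_add_le φ (θ₂ - θ₁)
    have h2 : |θ₂ - θ₁| = t := by rw [htdef, abs_sub_comm]
    linarith
  have hθlb : t - d / 2 ≤ |φ + θ₂ - θ₁| := by
    have h2 : |θ₂ - θ₁| = t := by rw [htdef, abs_sub_comm]
    have h := abs_add_le (-φ) (φ + θ₂ - θ₁)
    have e : -φ + (φ + θ₂ - θ₁) = θ₂ - θ₁ := by ring
    rw [e, abs_neg, h2] at h
    linarith
  refine ⟨E1⁻¹ * (ζ₂ - ζ₁) / q, φ + θ₂ - θ₁, ?_, ?_, ?_, ?_⟩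
  · linarith
  · rcases le_total t d with h | h
    · rw [max_eq_left h]
      exact le_trans (by linarith) (le_max_left _ _)
    · rw [max_eq_right h]
      exact le_trans (by linarith) (le_max_right _ _)
  · apply max_le
    · exact le_trans hζub (by nlinarith [le_max_left d t])
    · have := le_max_left d t
      have := le_max_right d t
      linarith
  · intro ξ hξ
    have hξ0 := norm_nonneg ξ
    have hE1ne : E1 ≠ 0 := Complex.exp_ne_zero _
    have hexpφ : Complex.exp ((φ : ℂ) * Complex.I) = q' / q := by
      have h := Complex.norm_mul_exp_arg_mul_I (q' / q)
      rw [← hφdef, habsl] at h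
      simpa using h
    have hexpθ : Complex.exp ((↑(φ + θ₂ - θ₁) : ℂ) * Complex.I) = q' / q * E2 * E1⁻¹ := by
      push_cast
      rw [show ((φ : ℂ) + ↑θ₂ - ↑θ₁) * Complex.I
          = (φ : ℂ) * Complex.I + ((θ₂ : ℂ) * Complex.I + -((θ₁ : ℂ) * Complex.I)) by ring]
      rw [Complex.exp_add, Complex.exp_add, Complex.exp_neg, hexpφ, ← hE1def, ← hE2def]
      ring
    have hconjE1 : (starRingEnd ℂ) E1 = E1⁻¹ := by
      rw [hE1def, ← Complex.exp_conj, ← Complex.exp_neg]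
      congr 1
      simp
    have hconjζ : (starRingEnd ℂ) (E1⁻¹ * (ζ₂ - ζ₁) / q) = E1 * (w2 - w1) / q' := by
      rw [map_div₀, map_mul, map_inv₀, hconjE1, inv_inv, map_sub, ← hw2, ← hw1, ← hq'q]
    have hQ : q + (w2 - w1) * (E2 * ξ) ≠ 0 := by
      have habsdiff : ‖(w2 - w1) * (E2 * ξ)‖ < 1 / 2 := by
        rw [norm_mul, norm_mul, hw2, hw1, ← map_sub, Complex.norm_conj,
          norm_sub_rev, ← hddef, hE2def, Complex.norm_exp_ofReal_mul_I]
        nlinarith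
      intro h0
      have hq' : q = -((w2 - w1) * (E2 * ξ)) := by linear_combination h0
      rw [hq', norm_neg] at hqlb
      linarith
    have hfac : (1 : ℂ) - ζ₁ * w1 ≠ 0 := by
      have habs : ‖-(ζ₁ * w1)‖ < 1 := by
        rw [norm_neg, norm_mul, hw1, Complex.norm_conj]
        nlinarith
      have := one_add_ne _ habs
      rwa [← sub_eq_add_neg] at this
    have hD2 : 1 + w2 * (E2 * ξ) ≠ 0 := by
      apply one_add_ne
      rw [norm_mul, hw2, Complex.norm_conj, norm_mul, hE2def, Complex.norm_exp_ofReal_mul_I]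
      nlinarith
    have hnum1 : Complex.exp ((↑(φ + θ₂ - θ₁) : ℂ) * Complex.I) * ξ + E1⁻¹ * (ζ₂ - ζ₁) / q
        = E1⁻¹ * (q' * (E2 * ξ) + (ζ₂ - ζ₁)) / q := by
      rw [hexpθ]
      field_simp
    have hden1 : 1 + (starRingEnd ℂ) (E1⁻¹ * (ζ₂ - ζ₁) / q)
          * (Complex.exp ((↑(φ + θ₂ - θ₁) : ℂ) * Complex.I) * ξ)
        = (q + (w2 - w1) * (E2 * ξ)) / q := by
      rw [hconjζ, hexpθ]
      field_simp
    have hm : moebius (E1⁻¹ * (ζ₂ - ζ₁) / q) (Complex.exp ((↑(φ + θ₂ - θ₁) : ℂ) * Complex.I) * ξ)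
        = E1⁻¹ * (q' * (E2 * ξ) + (ζ₂ - ζ₁)) / (q + (w2 - w1) * (E2 * ξ)) := by
      rw [moebius, hnum1, hden1]
      rw [div_div_div_cancel_right₀]
      exact hq0
    have hnum2 : E1 * (E1⁻¹ * (q' * (E2 * ξ) + (ζ₂ - ζ₁)) / (q + (w2 - w1) * (E2 * ξ))) + ζ₁
        = ((1 : ℂ) - ζ₁ * w1) * (E2 * ξ + ζ₂) / (q + (w2 - w1) * (E2 * ξ)) := by
      rw [mul_div_assoc E1⁻¹, mul_inv_cancel_left₀ hE1ne, div_add' _ _ _ hQ]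
      congr 1
      rw [hqdef, hq'def]
      ring
    have hden2 : 1 + w1 * (E1 * (E1⁻¹ * (q' * (E2 * ξ) + (ζ₂ - ζ₁)) / (q + (w2 - w1) * (E2 * ξ))))
        = ((1 : ℂ) - ζ₁ * w1) * (1 + w2 * (E2 * ξ)) / (q + (w2 - w1) * (E2 * ξ)) := by
      rw [mul_div_assoc E1⁻¹, mul_inv_cancel_left₀ hE1ne, mul_div_assoc', add_div' _ _ _ hQ]
      congr 1
      rw [hqdef, hq'def]
      ring
    rw [moebius, moebius, hm, hnum2, hden2, mdiv_helper _ _ _ _ hD2 hfac hQ]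
end

section
/- For all ζ₁, ζ₂ ∈ ℂ with |ζ₁| ≤ 1/8 and |ζ₂| ≤ 1/8, one has | 1 − (1 − ζ₁·conj(ζ₂))/(1 − conj(ζ₁)·ζ₂) | = | 2·Im(ζ₁·conj(ζ₂)) | / |1 − conj(ζ₁)·ζ₂| ≤ (1/2)·|ζ₁ − ζ₂|. -/
/-- bound on the rotation factor arising when composing Möbius maps. -/
theorem stmt_15 (ζ₁ ζ₂ : ℂ) (h1 : ‖ζ₁‖ ≤ 1 / 8) (h2 : ‖ζ₂‖ ≤ 1 / 8) :
    ‖1 - (1 - ζ₁ * (starRingEnd ℂ) ζ₂) / (1 - (starRingEnd ℂ) ζ₁ * ζ₂)‖ =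
      |2 * (ζ₁ * (starRingEnd ℂ) ζ₂).im| / ‖1 - (starRingEnd ℂ) ζ₁ * ζ₂‖ ∧
    ‖1 - (1 - ζ₁ * (starRingEnd ℂ) ζ₂) / (1 - (starRingEnd ℂ) ζ₁ * ζ₂)‖ ≤
      (1 / 2) * ‖ζ₁ - ζ₂‖ := by
  set w : ℂ := (starRingEnd ℂ) ζ₁ * ζ₂ with hw
  have hcw : ζ₁ * (starRingEnd ℂ) ζ₂ = (starRingEnd ℂ) w := by
    rw [hw, map_mul, Complex.conj_conj]
  have habsw : ‖w‖ ≤ 1 / 64 := by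
    rw [hw, norm_mul, Complex.norm_conj]
    calc ‖ζ₁‖ * ‖ζ₂‖ ≤ (1/8) * (1/8) := by
          exact mul_le_mul h1 h2 (norm_nonneg _) (by norm_num)
      _ = 1/64 := by norm_num
  have h1w : (1:ℝ)/2 ≤ ‖1 - w‖ := by
    have := norm_sub_norm_le (1:ℂ) w
    simp only [norm_one] at this
    linarith
  have hne : (1:ℂ) - w ≠ 0 := by
    intro h
    rw [h] at h1w
    simp at h1w
    linarith
  have hkey : 1 - (1 - (starRingEnd ℂ) w) / (1 - w)
      = ((starRingEnd ℂ) w - w) / (1 - w) := by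
    field_simp
    ring
  have hnum : (starRingEnd ℂ) w - w = Complex.I * (-2 * w.im) := by
    apply Complex.ext <;> simp <;> ring
  have habsnum : ‖(starRingEnd ℂ) w - w‖ = |2 * ((starRingEnd ℂ) w).im| := by
    rw [hnum]
    simp [abs_mul, abs_neg]
  have habseq : ‖1 - (1 - (starRingEnd ℂ) w) / (1 - w)‖
      = |2 * ((starRingEnd ℂ) w).im| / ‖1 - w‖ := by
    rw [hkey, norm_div, habsnum]
  constructor
  · rw [hcw]; exact habseq
  · rw [hcw, habseq]
    -- bound the numerator
    have him : w.im = ((starRingEnd ℂ) ζ₁ * (ζ₂ - ζ₁)).im := by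
      rw [hw]
      have : (starRingEnd ℂ) ζ₁ * ζ₂ = (starRingEnd ℂ) ζ₁ * (ζ₂ - ζ₁) + (starRingEnd ℂ) ζ₁ * ζ₁ := by ring
      rw [this, Complex.add_im]
      have : ((starRingEnd ℂ) ζ₁ * ζ₁).im = 0 := by
        rw [Complex.mul_im]; simp [Complex.conj_re, Complex.conj_im]; ring
      rw [this]; ring
    have hbound : |w.im| ≤ (1/8) * ‖ζ₁ - ζ₂‖ := by
      rw [him]
      calc |((starRingEnd ℂ) ζ₁ * (ζ₂ - ζ₁)).im| ≤ ‖(starRingEnd ℂ) ζ₁ * (ζ₂ - ζ₁)‖ :=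
            Complex.abs_im_le_norm _
        _ = ‖ζ₁‖ * ‖ζ₂ - ζ₁‖ := by rw [norm_mul, Complex.norm_conj]
        _ ≤ (1/8) * ‖ζ₁ - ζ₂‖ := by
            rw [← norm_sub_rev ζ₂ ζ₁] at *
            exact mul_le_mul_of_nonneg_right h1 (norm_nonneg _)
    have himcw : ((starRingEnd ℂ) w).im = -w.im := by simp
    rw [himcw]
    have h2im : |2 * (-w.im)| = 2 * |w.im| := by rw [abs_mul, abs_neg]; norm_num
    rw [h2im]
    have hpos : (0:ℝ) < ‖1 - w‖ := lt_of_lt_of_le (by norm_num) h1w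
    rw [div_le_iff₀ hpos]
    calc 2 * |w.im| ≤ 2 * ((1/8) * ‖ζ₁ - ζ₂‖) := by linarith [hbound]
      _ = (1/4) * ‖ζ₁ - ζ₂‖ := by ring
      _ ≤ (1/2) * ‖ζ₁ - ζ₂‖ * (1/2) := by nlinarith [norm_nonneg (ζ₁ - ζ₂)]
      _ ≤ (1/2) * ‖ζ₁ - ζ₂‖ * ‖1 - w‖ := by
          apply mul_le_mul_of_nonneg_left h1w
          positivity
end
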